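/- Let a(θ) ∈ ℝ^{N²} be defined by V_θ A(a) V_θ† = A(a(θ)), where V_θ acts as U_θ = exp(i(θ/2)c̃·σ) on the two-dimensional range L of A(a) and as the identity on its kernel. Then ‖a(θ)‖ = ‖a‖ for all θ ∈ [0, π], a(0) = a, a(π) = −a, and for θ, θ' ∈ [0,π] one has a(θ)·a(θ') = ‖a‖² cos(θ − θ'). -/

import Mathlib

open Matrix

/-- The Bloch combination `ã·σ` of the three Pauli matrices. -/
noncomputable def pauliCombo (t : Fin 3 → ℝ) : Matrix (Fin 2) (Fin 2) ℂ :=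
  (t 0 : ℂ) • !![0, 1; 1, 0] + (t 1 : ℂ) • !![0, -Complex.I; Complex.I, 0] +
    (t 2 : ℂ) • !![1, 0; 0, -1]

/-- The trace-orthonormal Hermitian basis `{F_k}` built from the Schmidt basis of `H_A`. -/
noncomputable def hermBasis (N : ℕ) (k : Fin N × Fin N) : Matrix (Fin N) (Fin N) ℂ :=
  if k.1 = k.2 then Matrix.single k.1 k.1 1
  else if k.1 < k.2 then
    ((Real.sqrt 2 : ℂ))⁻¹ • (Matrix.single k.1 k.2 1 + Matrix.single k.2 k.1 1)
  else
    (Complex.I * ((Real.sqrt 2 : ℂ))⁻¹) •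
      (Matrix.single k.2 k.1 1 - Matrix.single k.1 k.2 1)

/-- Alice's observable `A(a) = ∑ₖ aₖ Fₖ`. -/
noncomputable def Aop (N : ℕ) (a : Fin N × Fin N → ℝ) : Matrix (Fin N) (Fin N) ℂ :=
  ∑ k, (a k : ℂ) • hermBasis N k

lemma pauli_anticomm (s u : Fin 3 → ℝ) :
    pauliCombo s * pauliCombo u + pauliCombo u * pauliCombo s
      = ((2 * ∑ i, s i * u i : ℝ) : ℂ) • 1 := by
  ext i j
  fin_cases i <;> fin_cases j <;>
    · simp [pauliCombo, Matrix.mul_apply, Fin.sum_univ_succ, Matrix.one_apply]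
      push_cast
      ring_nf
      try simp only [Complex.I_sq]
      try ring

lemma pauli_trace (s : Fin 3 → ℝ) : Matrix.trace (pauliCombo s) = 0 := by
  simp [pauliCombo, Matrix.trace, Fin.sum_univ_two]

lemma pauli_conjTranspose (s : Fin 3 → ℝ) : (pauliCombo s)ᴴ = pauliCombo s := by
  ext i j
  fin_cases i <;> fin_cases j <;>
    simp [pauliCombo, Matrix.conjTranspose_apply, Complex.ext_iff]

lemma trE {N : ℕ} (a b c d : Fin N) :
    Matrix.trace (Matrix.single a b (1:ℂ) * Matrix.single c d 1)
      = if b = c ∧ d = a then 1 else 0 := by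
  rcases eq_or_ne b c with rfl | h
  · rw [Matrix.single_mul_single_same]
    rcases eq_or_ne d a with rfl | h2
    · simp [Matrix.trace_single_eq_same]
    · rw [Matrix.trace_single_eq_of_ne (h := h2.symm)]
      simp [h2]
  · rw [Matrix.single_mul_single_of_ne (h := h)]
    simp [h]

lemma sqrt2_inv_sq : ((Real.sqrt 2 : ℂ))⁻¹ * ((Real.sqrt 2 : ℂ))⁻¹ = 2⁻¹ := by
  rw [← mul_inv]
  norm_cast
  rw [Real.mul_self_sqrt (by norm_num)]
  norm_num

lemma sqrt2_inv_sq' : ((Real.sqrt 2 : ℂ))⁻¹ ^ 2 = 2⁻¹ := by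
  rw [sq, sqrt2_inv_sq]

lemma Isq2 : Complex.I * ((Real.sqrt 2 : ℂ))⁻¹ * (Complex.I * ((Real.sqrt 2 : ℂ))⁻¹) = -2⁻¹ := by
  rw [mul_mul_mul_comm, Complex.I_mul_I, sqrt2_inv_sq]
  ring

set_option maxHeartbeats 1000000 in
lemma trace_herm_mul {N : ℕ} (k l : Fin N × Fin N) :
    Matrix.trace (hermBasis N k * hermBasis N l) = if k = l then 1 else 0 := by
  obtain ⟨i, j⟩ := k
  obtain ⟨p, q⟩ := l
  simp only [hermBasis, Prod.mk.injEq]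
  split_ifs with h1 h2 h3 h4 h5 h6 h7 h8 h9 <;>
  · simp only [smul_mul_assoc, mul_smul_comm, add_mul, mul_add, sub_mul, mul_sub,
      Matrix.trace_smul, Matrix.trace_add, Matrix.trace_sub, trE, smul_eq_mul]
    split_ifs <;>
      first
        | (exfalso; simp only [Fin.ext_iff, Fin.lt_def] at *; omega)
        | (simp only [sqrt2_inv_sq, Isq2]; norm_num; done)
        | (ring_nf; simp only [Complex.I_sq, sqrt2_inv_sq']; norm_num; done)
        | (norm_num; done)
        | rfl
        | (ring_nf; done)
        | ring

lemma trace_Aop_mul {N : ℕ} (x y : Fin N × Fin N → ℝ) :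
    Matrix.trace (Aop N x * Aop N y) = ((∑ k, x k * y k : ℝ) : ℂ) := by
  unfold Aop
  rw [Finset.sum_mul_sum]
  rw [Matrix.trace_sum]
  simp only [Matrix.trace_sum, smul_mul_assoc, mul_smul_comm, Matrix.trace_smul, smul_eq_mul,
    trace_herm_mul, mul_ite, mul_one, mul_zero, Finset.sum_ite_eq', Finset.mem_univ, if_true]
  push_cast
  ring_nf
  simp [mul_comm]

lemma Aop_inj {N : ℕ} {x y : Fin N × Fin N → ℝ} (h : Aop N x = Aop N y) : x = y := by
  have hA : Aop N (fun k => x k - y k) = 0 := by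
    unfold Aop at h ⊢
    push_cast
    simp only [sub_smul, Finset.sum_sub_distrib]
    rw [h]
    simp
  have ht : ((∑ k, (x k - y k) * (x k - y k) : ℝ) : ℂ) = 0 := by
    rw [← trace_Aop_mul, hA]
    simp
  have ht' : (∑ k, (x k - y k) * (x k - y k) : ℝ) = 0 := by exact_mod_cast ht
  funext k
  have := Finset.sum_eq_zero_iff_of_nonneg (fun i _ => mul_self_nonneg (x i - y i)) |>.mp ht' k
    (Finset.mem_univ k)
  have := mul_self_eq_zero.mp this
  linarith

lemma Aop_neg {N : ℕ} (x : Fin N × Fin N → ℝ) :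
    Aop N (fun k => -(x k)) = -(Aop N x) := by
  unfold Aop
  push_cast
  simp [neg_smul, ← Finset.sum_neg_distrib]

set_option maxHeartbeats 800000 in
lemma exp_invol (C : Matrix (Fin 2) (Fin 2) ℂ) (hC : C * C = 1) (ψ : ℝ) :
    NormedSpace.exp ((Complex.I * ψ) • C)
      = (Real.cos ψ : ℂ) • 1 + (Complex.I * Real.sin ψ) • C := by
  letI : SeminormedRing (Matrix (Fin 2) (Fin 2) ℂ) := Matrix.linftyOpSemiNormedRing
  letI : NormedRing (Matrix (Fin 2) (Fin 2) ℂ) := Matrix.linftyOpNormedRing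
  letI : NormedAlgebra ℂ (Matrix (Fin 2) (Fin 2) ℂ) := Matrix.linftyOpNormedAlgebra
  have hmain : HasSum (fun n : ℕ => ((Nat.factorial n : ℂ))⁻¹ • ((Complex.I * ψ) • C) ^ n)
      ((Real.cos ψ : ℂ) • (1 : Matrix (Fin 2) (Fin 2) ℂ) + (Complex.I * Real.sin ψ) • C) := by
    have heven : HasSum
        (fun k : ℕ => ((Nat.factorial (2 * k) : ℂ))⁻¹ • ((Complex.I * ψ) • C) ^ (2 * k))
        ((Real.cos ψ : ℂ) • (1 : Matrix (Fin 2) (Fin 2) ℂ)) := by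
      have h1 := (Complex.hasSum_cos' (ψ : ℂ)).smul_const (1 : Matrix (Fin 2) (Fin 2) ℂ)
      rw [← Complex.ofReal_cos] at h1
      convert h1 using 2 with k
      rw [smul_pow, pow_mul C, pow_two, hC, one_pow, smul_smul]
      congr 1
      ring
    have hodd : HasSum
        (fun k : ℕ => ((Nat.factorial (2 * k + 1) : ℂ))⁻¹ • ((Complex.I * ψ) • C) ^ (2 * k + 1))
        ((Complex.I * Real.sin ψ) • C) := by
      have h1 := ((Complex.hasSum_sin' (ψ : ℂ)).mul_right Complex.I).smul_const C
      have h2 : ((Complex.sin ψ) * Complex.I) • C = (Complex.I * Real.sin ψ) • C := by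
        rw [mul_comm, Complex.ofReal_sin]
      rw [h2] at h1
      convert h1 using 2 with k
      rw [smul_pow, pow_succ C, pow_mul C, pow_two, hC, one_pow, one_mul, smul_smul]
      congr 1
      rw [div_mul_cancel₀ _ Complex.I_ne_zero]
      ring
    exact heven.even_add_odd hodd
  rw [NormedSpace.exp_eq_tsum ℂ]
  exact hmain.tsum_eq

noncomputable def phi {N : ℕ} (v : Fin 2 → EuclideanSpace ℂ (Fin N))
    (M : Matrix (Fin 2) (Fin 2) ℂ) : Matrix (Fin N) (Fin N) ℂ :=
  ∑ i, ∑ j, M i j • Matrix.vecMulVec (v i) (star (v j))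

variable {N : ℕ} {v : Fin 2 → EuclideanSpace ℂ (Fin N)}

lemma hdot (hv : Orthonormal ℂ v) (i j : Fin 2) :
    ∑ m, star (v i m) * v j m = if i = j then 1 else 0 := by
  have h := orthonormal_iff_ite.mp hv i j
  rw [← h]
  simp [PiLp.inner_apply, RCLike.inner_apply]
  exact Finset.sum_congr rfl fun _ _ => mul_comm _ _

lemma vmv_mul (hv : Orthonormal ℂ v) (i j k l : Fin 2) :
    Matrix.vecMulVec (v i) (star (v j)) * Matrix.vecMulVec (v k) (star (v l))
      = ((if j = k then 1 else 0 : ℂ)) • Matrix.vecMulVec (v i) (star (v l)) := by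
  ext a b
  simp only [Matrix.mul_apply, Matrix.vecMulVec_apply, Matrix.smul_apply, smul_eq_mul,
    Pi.star_apply]
  have hterm : ∀ m, v i a * star (v j m) * (v k m * star (v l b))
      = (v i a * star (v l b)) * (star (v j m) * v k m) := fun m => by ring
  rw [Finset.sum_congr rfl (fun m _ => hterm m), ← Finset.mul_sum, hdot hv j k]
  split_ifs <;> ring

lemma vmv_conjTranspose (i j : Fin 2) :
    (Matrix.vecMulVec (v i) (star (v j)))ᴴ = Matrix.vecMulVec (v j) (star (v i)) := by
  ext a b
  simp only [Matrix.conjTranspose_apply, Matrix.vecMulVec_apply, Pi.star_apply, star_mul',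
    star_star]
  ring

lemma phi_mul (hv : Orthonormal ℂ v) (M P : Matrix (Fin 2) (Fin 2) ℂ) :
    phi v M * phi v P = phi v (M * P) := by
  simp only [phi, Fin.sum_univ_two, Matrix.mul_apply, add_mul, mul_add, smul_mul_assoc,
    mul_smul_comm, vmv_mul hv, smul_smul]
  norm_num
  module

lemma phi_trace (hv : Orthonormal ℂ v) (M : Matrix (Fin 2) (Fin 2) ℂ) :
    Matrix.trace (phi v M) = Matrix.trace M := by
  have hvmv : ∀ i j : Fin 2, Matrix.trace (Matrix.vecMulVec (v i) (star (v j)))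
      = if j = i then 1 else 0 := by
    intro i j
    rw [← hdot hv j i]
    simp only [Matrix.trace, Matrix.diag, Matrix.vecMulVec_apply, Pi.star_apply]
    exact Finset.sum_congr rfl fun m _ => by ring
  simp only [phi, Matrix.trace_sum, Matrix.trace_smul, hvmv, smul_eq_mul, mul_ite, mul_one,
    mul_zero]
  simp [Matrix.trace, Matrix.diag, Fin.sum_univ_two]

lemma phi_conjTranspose (M : Matrix (Fin 2) (Fin 2) ℂ) :
    (phi v M)ᴴ = phi v Mᴴ := by
  simp only [phi, Fin.sum_univ_two, Matrix.conjTranspose_add, Matrix.conjTranspose_smul,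
    vmv_conjTranspose, Matrix.conjTranspose_apply]
  module

lemma phi_add (M P : Matrix (Fin 2) (Fin 2) ℂ) : phi v (M + P) = phi v M + phi v P := by
  simp only [phi, Matrix.add_apply, add_smul, Finset.sum_add_distrib]

lemma phi_neg (M : Matrix (Fin 2) (Fin 2) ℂ) : phi v (-M) = -(phi v M) := by
  simp only [phi, Matrix.neg_apply, neg_smul, ← Finset.sum_neg_distrib]

lemma phi_zero : phi v (0 : Matrix (Fin 2) (Fin 2) ℂ) = 0 := by
  simp [phi]

set_option maxHeartbeats 1600000 in
/-- The curve `a(θ)` of coefficient vectors defined by `V_θ A(a) V_θ† = A(a(θ))`, where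
`V_θ` acts as `U_θ = exp(i(θ/2) c̃·σ)` on the two-dimensional range `L` of `A(a)`
(spanned by the orthonormal pair `v₀, v₁`, on which `A(a)` has unit Bloch form `ã·σ`)
and as the identity on its kernel, satisfies: `‖a(θ)‖ = ‖a‖` on `[0, π]`, `a(0) = a`,
`a(π) = −a`, and `a(θ)·a(θ') = ‖a‖² cos(θ − θ')` for `θ, θ' ∈ [0, π]`. -/
theorem curve_of_rotated_observable (N : ℕ) (hN : 2 ≤ N)
    (a : EuclideanSpace ℝ (Fin N × Fin N))
    (v : Fin 2 → EuclideanSpace ℂ (Fin N)) (hv : Orthonormal ℂ v)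
    (t c : Fin 3 → ℝ) (ht : ∑ i, (t i) ^ 2 = 1) (hc : ∑ i, (c i) ^ 2 = 1)
    (htc : ∑ i, t i * c i = 0)
    (hA : Aop N a = ∑ i, ∑ j, pauliCombo t i j • Matrix.vecMulVec (v i) (star (v j)))
    (U : ℝ → Matrix (Fin 2) (Fin 2) ℂ)
    (hU : ∀ θ, U θ = NormedSpace.exp ((Complex.I * (θ / 2 : ℝ)) • pauliCombo c))
    (V : ℝ → Matrix (Fin N) (Fin N) ℂ)
    (hV : ∀ θ, V θ = 1 + ∑ i, ∑ j,
      (U θ i j - (1 : Matrix (Fin 2) (Fin 2) ℂ) i j) • Matrix.vecMulVec (v i) (star (v j)))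
    (aθ : ℝ → EuclideanSpace ℝ (Fin N × Fin N))
    (hcurve : ∀ θ, Aop N (aθ θ) = V θ * Aop N a * (V θ)ᴴ) :
    (∀ θ ∈ Set.Icc 0 Real.pi, ‖aθ θ‖ = ‖a‖) ∧
    aθ 0 = a ∧ aθ Real.pi = -a ∧
    (∀ θ ∈ Set.Icc 0 Real.pi, ∀ θ' ∈ Set.Icc 0 Real.pi,
      ∑ k, aθ θ k * aθ θ' k = ‖a‖ ^ 2 * Real.cos (θ - θ')) := by
  classical
  set T := pauliCombo t with hTdef
  set C := pauliCombo c with hCdef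
  -- basic Pauli algebra
  have htt : (∑ i, t i * t i) = 1 := by simpa [pow_two] using ht
  have hcc : (∑ i, c i * c i) = 1 := by simpa [pow_two] using hc
  have hT2 : T * T = 1 := by
    have h := pauli_anticomm t t
    rw [htt, ← two_smul ℂ (T * T)] at h
    have h2 := congrArg (fun M : Matrix (Fin 2) (Fin 2) ℂ => (2 : ℂ)⁻¹ • M) h
    simp only [smul_smul] at h2
    norm_num at h2
    exact h2
  have hC2 : C * C = 1 := by
    have h := pauli_anticomm c c
    rw [hcc, ← two_smul ℂ (C * C)] at h
    have h2 := congrArg (fun M : Matrix (Fin 2) (Fin 2) ℂ => (2 : ℂ)⁻¹ • M) h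
    simp only [smul_smul] at h2
    norm_num at h2
    exact h2
  have hTC : T * C = -(C * T) := by
    have h := pauli_anticomm t c
    rw [htc] at h
    have h0 : T * C + C * T = 0 := by
      rw [h]
      norm_num
    exact eq_neg_of_add_eq_zero_left h0
  have hCH : Cᴴ = C := pauli_conjTranspose c
  -- derived products
  have hCTC : C * T * C = -T := by
    rw [mul_assoc, hTC, mul_neg, ← mul_assoc, hC2, one_mul]
  have hTCT : T * (C * T) = -C := by
    rw [← mul_assoc, hTC, neg_mul, mul_assoc, hT2, mul_one]
  have hCTT : C * T * T = C := by
    rw [mul_assoc, hT2, mul_one]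
  have hCTCT : C * T * (C * T) = -1 := by
    rw [mul_assoc C T (C * T), hTCT, mul_neg, hC2]
  -- explicit form of U θ
  have hU' : ∀ θ : ℝ, U θ = (Real.cos (θ/2) : ℂ) • 1 + (Complex.I * Real.sin (θ/2)) • C := by
    intro θ
    rw [hU θ]
    exact exp_invol C hC2 (θ/2)
  have hUH : ∀ θ : ℝ, (U θ)ᴴ
      = (Real.cos (θ/2) : ℂ) • 1 - (Complex.I * Real.sin (θ/2)) • C := by
    intro θ
    rw [hU' θ]
    simp only [Matrix.conjTranspose_add, Matrix.conjTranspose_smul, Matrix.conjTranspose_smul,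
      Matrix.conjTranspose_one, hCH, Complex.star_def, _root_.map_mul, Complex.conj_I,
      Complex.conj_ofReal, neg_mul, neg_smul, ← sub_eq_add_neg]
  -- rotated Bloch matrix
  have hrot : ∀ θ : ℝ, U θ * T * (U θ)ᴴ
      = (Real.cos θ : ℂ) • T + (Complex.I * Real.sin θ) • (C * T) := by
    intro θ
    have hcos : (Real.cos θ : ℂ)
        = (Real.cos (θ/2) : ℂ) ^ 2 - (Real.sin (θ/2) : ℂ) ^ 2 := by
      have h1 := Real.cos_two_mul (θ/2)
      rw [show 2 * (θ/2) = θ by ring] at h1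
      have h2 := Real.sin_sq_add_cos_sq (θ/2)
      have hR : Real.cos θ = Real.cos (θ/2) ^ 2 - Real.sin (θ/2) ^ 2 := by
        rw [h1]; nlinarith [h2]
      rw [hR]
      push_cast
      ring
    have hsin : (Real.sin θ : ℂ) = 2 * (Real.sin (θ/2) : ℂ) * (Real.cos (θ/2) : ℂ) := by
      have h := Real.sin_two_mul (θ/2)
      rw [show 2 * (θ/2) = θ by ring] at h
      rw [h]
      push_cast
      ring
    rw [hUH θ, hU' θ, hcos, hsin]
    simp only [add_mul, mul_sub, mul_add, smul_mul_assoc, mul_smul_comm, one_mul, mul_one,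
      smul_smul, hTC, hCTC, smul_neg, mul_neg, neg_smul, neg_neg]
    match_scalars <;> (try push_cast) <;> (try ring_nf) <;> (try simp only [Complex.I_sq]) <;>
      (try push_cast) <;> (try ring_nf) <;> (try ring) <;> (try simp)
  -- Aop a = phi v T etc.
  have hA' : Aop N a = phi v T := hA
  have hV' : ∀ θ, V θ = 1 + phi v (U θ - 1) := hV
  have hkey : ∀ θ, Aop N (aθ θ)
      = phi v ((Real.cos θ : ℂ) • T + (Complex.I * Real.sin θ) • (C * T)) := by
    intro θ
    have hLmul : ∀ X Y : Matrix (Fin 2) (Fin 2) ℂ,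
        (1 + phi v X) * phi v Y = phi v (Y + X * Y) := by
      intro X Y
      rw [add_mul, one_mul, phi_mul hv, ← phi_add]
    have hRmul : ∀ X Y : Matrix (Fin 2) (Fin 2) ℂ,
        phi v Y * (1 + phi v X) = phi v (Y + Y * X) := by
      intro X Y
      rw [mul_add, mul_one, phi_mul hv, ← phi_add]
    rw [hcurve θ, hV' θ, hA', Matrix.conjTranspose_add, Matrix.conjTranspose_one,
      phi_conjTranspose, hLmul, hRmul, ← hrot θ]
    refine congrArg (phi v) ?_
    rw [Matrix.conjTranspose_sub, Matrix.conjTranspose_one]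
    noncomm_ring
  -- the inner-product computation
  have hsum : ∀ θ θ' : ℝ, ∑ k, aθ θ k * aθ θ' k = 2 * Real.cos (θ - θ') := by
    intro θ θ'
    have h1 : ((∑ k, aθ θ k * aθ θ' k : ℝ) : ℂ) = ((2 * Real.cos (θ - θ') : ℝ) : ℂ) := by
      rw [← trace_Aop_mul]
      rw [hkey θ, hkey θ', phi_mul hv, phi_trace hv]
      simp only [add_mul, mul_add, smul_mul_assoc, mul_smul_comm, smul_smul, hT2, hTCT,
        hCTT, hCTCT]
      simp only [Matrix.trace_add, Matrix.trace_smul, Matrix.trace_one, Matrix.trace_neg,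
        pauli_trace, ← hCdef]
      rw [show Matrix.trace C = 0 from pauli_trace c]
      push_cast [Real.cos_sub]
      simp only [smul_eq_mul]
      ring_nf
      simp only [Complex.I_sq, Fintype.card_fin, Nat.cast_ofNat]
      ring
    exact_mod_cast h1
  have hsum_aa : (∑ k, a k * a k : ℝ) = 2 := by
    have h1 : ((∑ k, a k * a k : ℝ) : ℂ) = ((2 : ℝ) : ℂ) := by
      rw [← trace_Aop_mul, hA', phi_mul hv, phi_trace hv, hT2, Matrix.trace_one]
      norm_num
    exact_mod_cast h1
  have hnorm : ∀ x : EuclideanSpace ℝ (Fin N × Fin N), ‖x‖ = Real.sqrt (∑ k, x k * x k) := by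
    intro x
    rw [EuclideanSpace.norm_eq]
    congr 1
    exact Finset.sum_congr rfl fun k _ => by rw [Real.norm_eq_abs, sq_abs, pow_two]
  have hna : ‖a‖ = Real.sqrt 2 := by rw [hnorm, hsum_aa]
  have hna2 : ‖a‖ ^ 2 = 2 := by
    rw [hna, Real.sq_sqrt]
    norm_num
  refine ⟨?_, ?_, ?_, ?_⟩
  · intro θ _
    rw [hnorm (aθ θ), hna]
    congr 1
    rw [show (∑ k, aθ θ k * aθ θ k : ℝ) = 2 * Real.cos (θ - θ) from hsum θ θ]
    simp
  · have h0 : Aop N (aθ 0) = Aop N a := by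
      rw [hkey 0, hA']
      congr 1
      norm_num
    exact WithLp.ofLp_injective 2 (Aop_inj h0)
  · have hπ : Aop N (aθ Real.pi) = Aop N (fun k => -(a k)) := by
      rw [hkey Real.pi, Aop_neg, hA', ← phi_neg]
      congr 1
      rw [Real.cos_pi, Real.sin_pi]
      push_cast
      simp
    exact WithLp.ofLp_injective 2 (Aop_inj hπ)
  · intro θ _ θ' _
    rw [hsum θ θ', hna2]
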